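/- arXiv:2107.10755 — 2 statements merged into one kernel-verified Lean document; each statement's English description precedes it below -/
import Mathlib

section
/- Fix n ≥ 1 and the origin O ∈ ℝⁿ. If T₁, T₂ ∈ D'(ℝⁿ) are distributions for which there exists an open set ω ⊂ ℝⁿ with O ∈ ω and T₁|_ω = T₂|_ω, then T₁ and T₂ have the same degree of divergence with respect to O: deg(T₁) = deg(T₂) (as elements of ℝ ∪ {±∞}). -/
/-!
Common framework: distributions with point singularities on open subsets of ℝⁿ,
following the paper's setup (test functions, distributions, restriction, scaling
degree and degree of divergence, singular fields, distributional operators).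
-/

set_option linter.unusedVariables false

open MeasureTheory Metric Filter Topology Set
open scoped ContDiff

namespace Paper

/-- Points of `ℝⁿ`. -/
abbrev Pt (n : ℕ) := Fin n → ℝ

/-- A test function for an open set `U ⊆ ℝⁿ`: a compactly supported smooth
function on `ℝⁿ` whose (closed) support lies inside `U`. -/
def IsTestFun {n : ℕ} (U : Set (Pt n)) (f : Pt n → ℝ) : Prop :=
  ContDiff ℝ ∞ f ∧ HasCompactSupport f ∧ tsupport f ⊆ U

theorem isTestFun_zero {n : ℕ} (U : Set (Pt n)) : IsTestFun U (0 : Pt n → ℝ) := by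
  have hts : tsupport (0 : Pt n → ℝ) = ∅ := by
    simp [tsupport, Function.support_zero]
  exact ⟨contDiff_const, by simp [HasCompactSupport, hts], by simp [hts]⟩

/-- The space `D(U)` of test functions, as a submodule of all functions `ℝⁿ → ℝ`. -/
def testSubmodule (n : ℕ) (U : Set (Pt n)) : Submodule ℝ (Pt n → ℝ) where
  carrier := {f | IsTestFun U f}
  add_mem' := fun hf hg =>
    ⟨hf.1.add hg.1, hf.2.1.add hg.2.1,
      (tsupport_add _ _).trans (union_subset hf.2.2 hg.2.2)⟩
  zero_mem' := isTestFun_zero U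
  smul_mem' := fun c f hf =>
    ⟨hf.1.const_smul c, hf.2.1.mono (Function.support_const_smul_subset c f),
      (closure_mono (Function.support_const_smul_subset c f)).trans hf.2.2⟩

abbrev TestFun (n : ℕ) (U : Set (Pt n)) := ↥(testSubmodule n U)

theorem TestFun.isTF {n : ℕ} {U : Set (Pt n)} (φ : TestFun n U) :
    IsTestFun U (φ : Pt n → ℝ) := φ.2

/-- Convergence of a sequence of test functions in `D(U)`: the supports stay inside a
common compact subset of `U` and all iterated derivatives converge uniformly. -/
def TFConv {n : ℕ} {U : Set (Pt n)} (φ : ℕ → TestFun n U) (ψ : TestFun n U) : Prop :=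
  (∃ K : Set (Pt n), IsCompact K ∧ K ⊆ U ∧ ∀ j, tsupport (φ j : Pt n → ℝ) ⊆ K) ∧
  ∀ m : ℕ, TendstoUniformly (fun j x => iteratedFDeriv ℝ m (φ j : Pt n → ℝ) x)
      (fun x => iteratedFDeriv ℝ m (ψ : Pt n → ℝ) x) atTop

/-- A distribution on `U`, i.e. an element of `D'(U)`: a linear functional on `D(U)`
which is (sequentially) continuous for the test-function topology. -/
structure Dist (n : ℕ) (U : Set (Pt n)) where
  toLin : TestFun n U →ₗ[ℝ] ℝ
  cont : ∀ (φ : ℕ → TestFun n U) (ψ : TestFun n U), TFConv φ ψ →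
    Tendsto (fun j => toLin (φ j)) atTop (𝓝 (toLin ψ))

instance {n : ℕ} {U : Set (Pt n)} : Zero (Dist n U) :=
  ⟨{ toLin := 0
     cont := by intro φ ψ _; simp only [LinearMap.zero_apply]; exact tendsto_const_nhds }⟩

/-- The inclusion `D(W) → D(U)` for `W ⊆ U` (extension of test functions by zero). -/
def tfIncl {n : ℕ} {W U : Set (Pt n)} (h : W ⊆ U) : TestFun n W →ₗ[ℝ] TestFun n U where
  toFun φ := ⟨(φ : Pt n → ℝ), φ.isTF.1, φ.isTF.2.1, φ.isTF.2.2.trans h⟩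
  map_add' φ ψ := rfl
  map_smul' c φ := rfl

/-- Restriction `T|_W ∈ D'(W)` of a distribution `T ∈ D'(U)` to a subset `W ⊆ U`. -/
noncomputable def Dist.restrict {n : ℕ} {U : Set (Pt n)} (T : Dist n U) {W : Set (Pt n)}
    (h : W ⊆ U) : Dist n W where
  toLin := T.toLin.comp (tfIncl h)
  cont := fun φ ψ hconv => by
    refine T.cont (fun j => tfIncl h (φ j)) (tfIncl h ψ) ⟨?_, hconv.2⟩
    obtain ⟨K, hK1, hK2, hK3⟩ := hconv.1
    exact ⟨K, hK1, hK2.trans h, hK3⟩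

/-- The partial derivative `∂f/∂xᵢ` of a function on `ℝⁿ`. -/
noncomputable def pderivFun {n : ℕ} (i : Fin n) (f : Pt n → ℝ) : Pt n → ℝ :=
  fun x => fderiv ℝ f x (Pi.single i 1)

theorem isTestFun_pderiv {n : ℕ} {U : Set (Pt n)} (i : Fin n) {f : Pt n → ℝ}
    (hf : IsTestFun U f) : IsTestFun U (pderivFun i f) := by
  have hsupp : Function.support (pderivFun i f) ⊆ tsupport f := by
    intro x hx
    apply support_fderiv_subset (𝕜 := ℝ)
    intro h
    exact hx (by simp [pderivFun, h])
  refine ⟨(hf.1.fderiv_right (by exact_mod_cast le_top)).clm_apply contDiff_const,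
    hf.2.1.mono' hsupp, ?_⟩
  exact (closure_minimal hsupp (isClosed_tsupport f)).trans hf.2.2

/-- The partial derivative `∂φ/∂xᵢ` of a test function. -/
noncomputable def pdT {n : ℕ} {U : Set (Pt n)} (i : Fin n) (φ : TestFun n U) : TestFun n U :=
  ⟨pderivFun i (φ : Pt n → ℝ), isTestFun_pderiv i φ.isTF⟩

/-- The iterated partial derivative `∂^α f` for a multi-index `α ∈ ℕⁿ`. -/
noncomputable def mpdN {n : ℕ} (α : Fin n → ℕ) (f : Pt n → ℝ) : Pt n → ℝ :=
  (List.finRange n).foldr (fun i g => (pderivFun i)^[α i] g) f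

/-- The iterated partial derivative `∂₁^a ∂₂^b f` in two dimensions. -/
noncomputable def mpd2 (a b : ℕ) (f : Pt 2 → ℝ) : Pt 2 → ℝ :=
  (pderivFun (0 : Fin 2))^[a] ((pderivFun (1 : Fin 2))^[b] f)

/-- The rescaled function `φ_λ(x) = λ⁻ⁿ φ(x/λ)`. -/
noncomputable def scaleFun {n : ℕ} (lam : ℝ) (f : Pt n → ℝ) : Pt n → ℝ :=
  fun x => (lam ^ n)⁻¹ * f (lam⁻¹ • x)

/-- `k` belongs to the scaling set of `T` (w.r.t. the origin) if
`λ^k (T|_{B_r})_λ → 0` in the sense of distributions as `λ → 0⁺`, for some ball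
`B_r` around the origin with `B_r ∖ {O} ⊆ U`.  The rescaled test functions are
encoded by an arbitrary family `Φ` with `(Φ λ) = φ_λ` for `λ ∈ (0,1)`. -/
def sdSet {n : ℕ} {U : Set (Pt n)} (T : Dist n U) : Set ℝ :=
  {k | ∃ r > 0, ball (0 : Pt n) r \ {0} ⊆ U ∧
    ∀ φ : TestFun n U, tsupport (φ : Pt n → ℝ) ⊆ ball (0 : Pt n) r →
    ∀ Φ : ℝ → TestFun n U,
      (∀ lam : ℝ, 0 < lam → lam < 1 → ((Φ lam : Pt n → ℝ) = scaleFun lam (φ : Pt n → ℝ))) →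
      Tendsto (fun lam : ℝ => lam ^ k * T.toLin (Φ lam)) (𝓝[>] 0) (𝓝 0)}

/-- The scaling degree of `T` with respect to the origin, as an extended real. -/
noncomputable def sd {n : ℕ} {U : Set (Pt n)} (T : Dist n U) : EReal :=
  sInf {x : EReal | ∃ k ∈ sdSet T, x = (k : EReal)}

/-- The degree of divergence `deg(T) = sd(T) − n` with respect to the origin. -/
noncomputable def degDiv {n : ℕ} {U : Set (Pt n)} (T : Dist n U) : EReal :=
  sd T - ((n : ℝ) : EReal)

/-- Scaling set for distributions on all of `ℝⁿ`, defined via global rescaling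
`T_λ(φ) = T(φ_λ)` (no localization to a ball). -/
def sdSetG {n : ℕ} (T : Dist n univ) : Set ℝ :=
  {k | ∀ φ : TestFun n univ, ∀ Φ : ℝ → TestFun n univ,
      (∀ lam : ℝ, 0 < lam → lam < 1 → ((Φ lam : Pt n → ℝ) = scaleFun lam (φ : Pt n → ℝ))) →
      Tendsto (fun lam : ℝ => lam ^ k * T.toLin (Φ lam)) (𝓝[>] 0) (𝓝 0)}

noncomputable def sdG {n : ℕ} (T : Dist n univ) : EReal :=
  sInf {x : EReal | ∃ k ∈ sdSetG T, x = (k : EReal)}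

/-- Degree of divergence (global version, for distributions on all of `ℝⁿ`). -/
noncomputable def degDivG {n : ℕ} (T : Dist n univ) : EReal :=
  sdG T - ((n : ℝ) : EReal)

/-- Scaling degree of an `ℝ²`-valued distribution. -/
noncomputable def sdV {U : Set (Pt 2)} (v : Fin 2 → Dist 2 U) : EReal := ⨆ i, sd (v i)

/-- Degree of divergence of an `ℝ²`-valued distribution. -/
noncomputable def degDivV {U : Set (Pt 2)} (v : Fin 2 → Dist 2 U) : EReal :=
  sdV v - ((2 : ℝ) : EReal)

/-- Scaling degree of a matrix-valued distribution. -/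
noncomputable def sdM {U : Set (Pt 2)} (V : Fin 2 → Fin 2 → Dist 2 U) : EReal :=
  ⨆ i, ⨆ j, sd (V i j)

/-- Degree of divergence of a matrix-valued distribution. -/
noncomputable def degDivM {U : Set (Pt 2)} (V : Fin 2 → Fin 2 → Dist 2 U) : EReal :=
  sdM V - ((2 : ℝ) : EReal)

/-- `x ∈ ℝ ∪ {±∞}` is finite. -/
def EReal.IsFinite (x : EReal) : Prop := ∃ k : ℝ, x = (k : EReal)

/-- `T` is represented on the subset `V ⊆ U` by the smooth function `f`:
this expresses that `T|_V` is the smooth map `f`. -/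
def RepOn {n : ℕ} {U : Set (Pt n)} (T : Dist n U) (f : Pt n → ℝ) (V : Set (Pt n)) : Prop :=
  ContDiffOn ℝ ∞ f V ∧
  ∀ φ : TestFun n U, tsupport (φ : Pt n → ℝ) ⊆ V →
    T.toLin φ = ∫ x, f x * (φ : Pt n → ℝ) x

/-- The support of `T` is contained in the set `S`:  `T` vanishes on every test
function whose support does not meet `S`. -/
def SuppIn {n : ℕ} {U : Set (Pt n)} (T : Dist n U) (S : Set (Pt n)) : Prop :=
  ∀ φ : TestFun n U, tsupport (φ : Pt n → ℝ) ∩ S = ∅ → T.toLin φ = 0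

/-! ### Two-dimensional geometry -/

/-- The point of the circle of radius `ε` (centred at the origin) at angle `θ`. -/
noncomputable def circPt (ε θ : ℝ) : Pt 2 := ![ε * Real.cos θ, ε * Real.sin θ]

/-- Unit tangent to the (counter-clockwise) circle at angle `θ`. -/
noncomputable def tanVec (θ : ℝ) : Pt 2 := ![-Real.sin θ, Real.cos θ]

/-- Outward unit normal to the circle at angle `θ`. -/
noncomputable def norVec (θ : ℝ) : Pt 2 := ![Real.cos θ, Real.sin θ]

/-- The closed Euclidean disc of radius `ε` centred at the origin. -/
def eball (ε : ℝ) : Set (Pt 2) := {x | x 0 ^ 2 + x 1 ^ 2 ≤ ε ^ 2}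

/-- The circulation `∮_{∂B_ε} ⟨A₀, t⟩ dl` of a vector field around the circle `∂B_ε`. -/
noncomputable def circTan (A0 : Fin 2 → Pt 2 → ℝ) (ε : ℝ) : ℝ :=
  ∫ θ in (0:ℝ)..(2 * Real.pi),
    (A0 0 (circPt ε θ) * (-Real.sin θ) + A0 1 (circPt ε θ) * Real.cos θ) * ε

/-- The flux `∮_{∂B_ε} ⟨A₀, n⟩ dl` of a vector field through the circle `∂B_ε`. -/
noncomputable def circNor (A0 : Fin 2 → Pt 2 → ℝ) (ε : ℝ) : ℝ :=
  ∫ θ in (0:ℝ)..(2 * Real.pi),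
    (A0 0 (circPt ε θ) * Real.cos θ + A0 1 (circPt ε θ) * Real.sin θ) * ε

/-- `curl f = ∂₁f₂ − ∂₂f₁` of a smooth planar vector field. -/
noncomputable def curlFun (A0 : Fin 2 → Pt 2 → ℝ) : Pt 2 → ℝ :=
  fun x => pderivFun 0 (A0 1) x - pderivFun 1 (A0 0) x

/-- `div f = ∂₁f₁ + ∂₂f₂` of a smooth planar vector field. -/
noncomputable def divFun (A0 : Fin 2 → Pt 2 → ℝ) : Pt 2 → ℝ :=
  fun x => pderivFun 0 (A0 0) x + pderivFun 1 (A0 1) x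

/-- `curl curl V = ∂₁∂₁V₂₂ − ∂₁∂₂(V₁₂+V₂₁) + ∂₂∂₂V₁₁` of a smooth matrix field. -/
noncomputable def ccFun (E0 : Fin 2 → Fin 2 → Pt 2 → ℝ) : Pt 2 → ℝ := fun x =>
  pderivFun 0 (pderivFun 0 (E0 1 1)) x
    - pderivFun 0 (pderivFun 1 (fun y => E0 0 1 y + E0 1 0 y)) x
    + pderivFun 1 (pderivFun 1 (E0 0 0)) x

/-- The `i`-th component of the Cesàro loop integral
`∮_{∂B_ε} { E₀(y) + (y−x) × curl E₀(y) } dy` around the circle `∂B_ε`. -/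
noncomputable def cesaro (E0 : Fin 2 → Fin 2 → Pt 2 → ℝ) (x : Pt 2) (ε : ℝ) (i : Fin 2) : ℝ :=
  ∫ θ in (0:ℝ)..(2 * Real.pi),
    (∑ j : Fin 2, (E0 i j (circPt ε θ) +
        ∑ k : Fin 2, (circPt ε θ k - x k) *
          (pderivFun j (E0 i k) (circPt ε θ) - pderivFun k (E0 i j) (circPt ε θ)))
      * tanVec θ j) * ε

/-! ### Distributional operators, expressed through their action on test functions -/

/-- `∇u = v` for distributions: `vᵢ(φ) = −u(∂ᵢφ)`. -/
def IsGradOf {n : ℕ} {U : Set (Pt n)} (u : Dist n U) (v : Fin n → Dist n U) : Prop :=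
  ∀ (i : Fin n) (φ : TestFun n U), (v i).toLin φ = - u.toLin (pdT i φ)

/-- `Curl v = T` for a planar vector distribution `v`:
`T(ψ) = −v(e₃ × ∇ψ) = v₁(∂₂ψ) − v₂(∂₁ψ)`. -/
def CurlEq {U : Set (Pt 2)} (v : Fin 2 → Dist 2 U) (T : Dist 2 U) : Prop :=
  ∀ ψ : TestFun 2 U, T.toLin ψ = (v 0).toLin (pdT 1 ψ) - (v 1).toLin (pdT 0 ψ)

/-- `Curl v = 0` for a planar vector distribution. -/
def CurlZero {U : Set (Pt 2)} (v : Fin 2 → Dist 2 U) : Prop :=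
  ∀ ψ : TestFun 2 U, (v 0).toLin (pdT 1 ψ) - (v 1).toLin (pdT 0 ψ) = 0

/-- `Div v = T` for a planar vector distribution `v`: `T(ψ) = −v(∇ψ)`. -/
def DivEq {U : Set (Pt 2)} (v : Fin 2 → Dist 2 U) (T : Dist 2 U) : Prop :=
  ∀ ψ : TestFun 2 U,
    T.toLin ψ = -((v 0).toLin (pdT 0 ψ) + (v 1).toLin (pdT 1 ψ))

/-- The stress equilibrium equation `Div σ + B = 0` in `D'(U, ℝ²)`, where
`(Div σ)ᵢ(ψ) = −Σⱼ σᵢⱼ(∂ⱼψ)`. -/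
def DivPlusEqZero {U : Set (Pt 2)} (σ : Fin 2 → Fin 2 → Dist 2 U)
    (B : Fin 2 → Dist 2 U) : Prop :=
  ∀ (i : Fin 2) (ψ : TestFun 2 U),
    -((σ i 0).toLin (pdT 0 ψ) + (σ i 1).toLin (pdT 1 ψ)) + (B i).toLin ψ = 0

/-- The evaluation `(Curl Curl V)(ψ) = V(𝔸∇²ψ)` for a matrix distribution `V`. -/
noncomputable def ccEval {U : Set (Pt 2)} (V : Fin 2 → Fin 2 → Dist 2 U)
    (ψ : TestFun 2 U) : ℝ :=
  (V 0 0).toLin (pdT 1 (pdT 1 ψ)) - (V 0 1).toLin (pdT 0 (pdT 1 ψ))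
    - (V 1 0).toLin (pdT 1 (pdT 0 ψ)) + (V 1 1).toLin (pdT 0 (pdT 0 ψ))

/-- `Curl Curl V = T` in `D'(U)` for a matrix distribution `V`. -/
def CurlCurlEq {U : Set (Pt 2)} (V : Fin 2 → Fin 2 → Dist 2 U) (T : Dist 2 U) : Prop :=
  ∀ ψ : TestFun 2 U, ccEval V ψ = T.toLin ψ

/-- `Curl Curl V = 0` in `D'(U)` for a matrix distribution `V`. -/
def CurlCurlZero {U : Set (Pt 2)} (V : Fin 2 → Fin 2 → Dist 2 U) : Prop :=
  ∀ ψ : TestFun 2 U, ccEval V ψ = 0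

/-- `E = (1/2)(∇u + (∇u)ᵀ)` for distributions:
`Eᵢⱼ(φ) = −(1/2)(uᵢ(∂ⱼφ) + uⱼ(∂ᵢφ))`. -/
def IsSymGrad {U : Set (Pt 2)} (u : Fin 2 → Dist 2 U)
    (E : Fin 2 → Fin 2 → Dist 2 U) : Prop :=
  ∀ (i j : Fin 2) (φ : TestFun 2 U),
    (E i j).toLin φ = -(1/2 : ℝ) * ((u i).toLin (pdT j φ) + (u j).toLin (pdT i φ))

/-- The polynomial `(−1)^{a+b} x₁^a x₂^b / (a! b!)`, the local model of the test
function `w^α` for the multi-index `α = (a,b)`. -/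
noncomputable def polyA (a b : ℕ) : Pt 2 → ℝ :=
  fun x => (-1 : ℝ) ^ (a + b) * x 0 ^ a * x 1 ^ b / ((Nat.factorial a : ℝ) * (Nat.factorial b : ℝ))

/-- If two distributions on `ℝⁿ` agree on all test functions supported in a
neighbourhood `W` of the origin, then `sdSetG T₁ ⊆ sdSetG T₂`. -/
theorem sdSetG_subset_of_agree {n : ℕ} (hn : 1 ≤ n) (T₁ T₂ : Dist n (univ : Set (Pt n)))
    (W : Set (Pt n)) (hW : IsOpen W) (h0 : (0 : Pt n) ∈ W)
    (heq : ∀ ψ : TestFun n (univ : Set (Pt n)), tsupport (ψ : Pt n → ℝ) ⊆ W →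
      T₁.toLin ψ = T₂.toLin ψ) :
    sdSetG T₁ ⊆ sdSetG T₂ := by
  intro k hk φ Φ hΦ
  obtain ⟨δ, hδpos, hδ⟩ := Metric.isOpen_iff.mp hW 0 h0
  obtain ⟨R, hR⟩ := (φ.isTF.2.1.isBounded).subset_closedBall 0
  set R' : ℝ := max R 1 with hR'def
  have hR'pos : (0 : ℝ) < R' := lt_of_lt_of_le one_pos (le_max_right _ _)
  have hR' : tsupport (φ : Pt n → ℝ) ⊆ closedBall 0 R' :=
    hR.trans (Metric.closedBall_subset_closedBall (le_max_left _ _))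
  refine (hk φ Φ hΦ).congr' ?_
  have hmem : Ioo (0 : ℝ) (min 1 (δ / R')) ∈ 𝓝[>] (0 : ℝ) :=
    Ioo_mem_nhdsGT_of_mem ⟨le_refl 0, lt_min one_pos (div_pos hδpos hR'pos)⟩
  filter_upwards [hmem] with lam hlam
  obtain ⟨hlam0, hlamlt⟩ := hlam
  have hlam1 : lam < 1 := lt_of_lt_of_le hlamlt (min_le_left _ _)
  have hlamδ : lam * R' < δ := by
    have := lt_of_lt_of_le hlamlt (min_le_right _ _)
    calc lam * R' < (δ / R') * R' := by
          exact mul_lt_mul_of_pos_right this hR'pos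
      _ = δ := div_mul_cancel₀ δ (ne_of_gt hR'pos)
  have hcoe : ((Φ lam : Pt n → ℝ)) = scaleFun lam (φ : Pt n → ℝ) := hΦ lam hlam0 hlam1
  -- the support of the rescaled function is contained in `W`
  have hsupp : tsupport ((Φ lam : Pt n → ℝ)) ⊆ W := by
    rw [hcoe]
    have hsub : Function.support (scaleFun lam (φ : Pt n → ℝ)) ⊆
        closedBall (0 : Pt n) (lam * R') := by
      intro x hx
      have hφx : (φ : Pt n → ℝ) (lam⁻¹ • x) ≠ 0 := by
        intro hzero
        apply hx
        simp [scaleFun, hzero]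
      have hmem' : lam⁻¹ • x ∈ closedBall (0 : Pt n) R' :=
        hR' (subset_closure hφx)
      rw [mem_closedBall_zero_iff] at hmem' ⊢
      have hnorm : ‖lam⁻¹ • x‖ = lam⁻¹ * ‖x‖ := by
        rw [norm_smul, Real.norm_eq_abs, abs_of_pos (inv_pos.mpr hlam0)]
      rw [hnorm] at hmem'
      calc ‖x‖ = lam * (lam⁻¹ * ‖x‖) := by field_simp
        _ ≤ lam * R' := mul_le_mul_of_nonneg_left hmem' (le_of_lt hlam0)
    have := closure_minimal hsub Metric.isClosed_closedBall
    exact this.trans ((Metric.closedBall_subset_ball hlamδ).trans hδ)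
  rw [heq (Φ lam) hsupp]

/-- If two distributions on `ℝⁿ` agree on an open neighbourhood of the
origin, they have the same degree of divergence with respect to the origin. -/
theorem statement_0 (n : ℕ) (hn : 1 ≤ n) (T₁ T₂ : Dist n (univ : Set (Pt n)))
    (h : ∃ W : Set (Pt n), IsOpen W ∧ (0 : Pt n) ∈ W ∧
      T₁.restrict (subset_univ W) = T₂.restrict (subset_univ W)) :
    degDivG T₁ = degDivG T₂ := by
  obtain ⟨W, hWopen, hW0, hWeq⟩ := h
  have heq : ∀ ψ : TestFun n (univ : Set (Pt n)), tsupport (ψ : Pt n → ℝ) ⊆ W →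
      T₁.toLin ψ = T₂.toLin ψ := by
    intro ψ hψ
    have hlin := congrArg Dist.toLin hWeq
    have := congrFun (congrArg (fun (L : TestFun n W →ₗ[ℝ] ℝ) => (L : TestFun n W → ℝ)) hlin)
      (⟨(ψ : Pt n → ℝ), ψ.isTF.1, ψ.isTF.2.1, hψ⟩ : TestFun n W)
    simpa [Dist.restrict, tfIncl] using this
  have hsub1 := sdSetG_subset_of_agree hn T₁ T₂ W hWopen hW0 heq
  have hsub2 := sdSetG_subset_of_agree hn T₂ T₁ W hWopen hW0 (fun ψ hψ => (heq ψ hψ).symm)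
  have hset : sdSetG T₁ = sdSetG T₂ := Set.Subset.antisymm hsub1 hsub2
  unfold degDivG sdG
  rw [hset]

end Paper
end

section
/- Let Ω ⊂ ℝ² be a simply connected, bounded, open set containing the origin O. If E ∈ E(Ω,ℝ²) satisfies Curl E = 0 in D'(Ω), then there exists u ∈ E(Ω) such that ∇u = E. -/
/-!
Common framework: distributions with point singularities on open subsets of ℝⁿ,
following the paper's setup (test functions, distributions, restriction, scaling
degree and degree of divergence, singular fields, distributional operators).
-/

set_option linter.unusedVariables false

open MeasureTheory Metric Filter Topology Set
open scoped ContDiff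

namespace Paper

/-! ### Auxiliary development for Statement 5 -/

set_option maxHeartbeats 1000000
set_option synthInstance.maxHeartbeats 1000000

section Statement5Aux

variable {V : Type*} [NormedAddCommGroup V] [NormedSpace ℝ V]

/-- The radial averaging operator `(Lop k f)(x) = ∫₀¹ tᵏ f(tx) dt`. -/
noncomputable def Lop (k : ℕ) (f : Pt 2 → V) (x : Pt 2) : V :=
  ∫ t in (0:ℝ)..1, t ^ k • f (t • x)

lemma lop_integrand_continuous {f : Pt 2 → V} (hf : Continuous f) (k : ℕ) (x : Pt 2) :
    Continuous fun t : ℝ => t ^ k • f (t • x) :=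
  (continuous_pow k).smul (hf.comp (continuous_id.smul continuous_const))

lemma lop_integrand_integrable {f : Pt 2 → V} (hf : Continuous f) (k : ℕ) (x : Pt 2) :
    IntervalIntegrable (fun t : ℝ => t ^ k • f (t • x)) volume 0 1 :=
  (lop_integrand_continuous hf k x).intervalIntegrable _ _

lemma lop_continuous [CompleteSpace V] {f : Pt 2 → V} (hf : Continuous f) (k : ℕ) :
    Continuous (Lop k f) := by
  apply intervalIntegral.continuous_parametric_intervalIntegral_of_continuous'
    (f := fun (x : Pt 2) (t : ℝ) => t ^ k • f (t • x))
  exact (continuous_snd.pow k).smul (hf.comp (continuous_snd.smul continuous_fst))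

lemma lop_add {f g : Pt 2 → V} (hf : Continuous f) (hg : Continuous g) (k : ℕ) (x : Pt 2) :
    Lop k (fun y => f y + g y) x = Lop k f x + Lop k g x := by
  unfold Lop
  rw [← intervalIntegral.integral_add (lop_integrand_integrable hf k x)
    (lop_integrand_integrable hg k x)]
  simp [smul_add]

lemma lop_sub {f g : Pt 2 → V} (hf : Continuous f) (hg : Continuous g) (k : ℕ) (x : Pt 2) :
    Lop k (fun y => f y - g y) x = Lop k f x - Lop k g x := by
  unfold Lop
  rw [← intervalIntegral.integral_sub (lop_integrand_integrable hf k x)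
    (lop_integrand_integrable hg k x)]
  simp [smul_sub]

lemma lop_smul {f : Pt 2 → V} (hf : Continuous f) (c : ℝ) (k : ℕ) (x : Pt 2) :
    Lop k (fun y => c • f y) x = c • Lop k f x := by
  unfold Lop
  rw [← intervalIntegral.integral_smul]
  congr 1; funext t; rw [smul_comm]

lemma lop_comp_clm {W : Type*} [NormedAddCommGroup W] [NormedSpace ℝ W]
    [CompleteSpace V] [CompleteSpace W] (L : V →L[ℝ] W) {f : Pt 2 → V}
    (hf : Continuous f) (k : ℕ) (x : Pt 2) :
    Lop k (fun y => L (f y)) x = L (Lop k f x) := by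
  unfold Lop
  rw [← L.intervalIntegral_comp_comm (lop_integrand_integrable hf k x)]
  congr 1; funext t; rw [ContinuousLinearMap.map_smul]

lemma lop_vanish {f : Pt 2 → V} {ρ : ℝ} (hv : ∀ y : Pt 2, ‖y‖ < ρ → f y = 0)
    (k : ℕ) {x : Pt 2} (hx : ‖x‖ < ρ) : Lop k f x = 0 := by
  unfold Lop
  rw [intervalIntegral.integral_of_le zero_le_one]
  apply MeasureTheory.integral_eq_zero_of_ae
  filter_upwards [MeasureTheory.ae_restrict_mem measurableSet_Ioc] with t ht
  have : ‖t • x‖ < ρ := by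
    rw [norm_smul]
    calc ‖t‖ * ‖x‖ ≤ 1 * ‖x‖ := by
          apply mul_le_mul_of_nonneg_right _ (norm_nonneg x)
          rw [Real.norm_eq_abs, abs_le]; constructor <;> [linarith [ht.1]; exact ht.2]
      _ = ‖x‖ := one_mul _
      _ < ρ := hx
  simp [hv _ this]

lemma lop_hasFDerivAt [CompleteSpace V] {f : Pt 2 → V} (hf : ContDiff ℝ ∞ f) (k : ℕ)
    (x₀ : Pt 2) : HasFDerivAt (Lop k f) (Lop (k + 1) (fderiv ℝ f) x₀) x₀ := by
  have hfc : Continuous f := hf.continuous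
  have hf' : ContDiff ℝ ∞ (fderiv ℝ f) := (contDiff_infty_iff_fderiv.mp hf).2
  have hf'c : Continuous (fderiv ℝ f) := hf'.continuous
  -- bound for the derivative on the closed ball of radius ‖x₀‖ + 1
  obtain ⟨M, hM⟩ := ((isCompact_closedBall (0 : Pt 2) (‖x₀‖ + 1)).exists_bound_of_continuousOn
    hf'c.continuousOn)
  have key : HasFDerivAt (fun x => ∫ t in (0:ℝ)..1, t ^ k • f (t • x))
      (∫ t in (0:ℝ)..1, t ^ (k + 1) • fderiv ℝ f (t • x₀)) x₀ := by
    apply intervalIntegral.hasFDerivAt_integral_of_dominated_of_fderiv_le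
      (F' := fun (x : Pt 2) (t : ℝ) => t ^ (k + 1) • fderiv ℝ f (t • x))
      (bound := fun _ => max M 0) (s := ball x₀ 1) (ball_mem_nhds x₀ one_pos)
    · filter_upwards with x
      exact (lop_integrand_continuous hfc k x).aestronglyMeasurable
    · exact lop_integrand_integrable hfc k x₀
    · exact ((continuous_pow (k+1)).smul
        (hf'c.comp (continuous_id.smul continuous_const))).aestronglyMeasurable
    · filter_upwards with t
      intro ht x hx
      have ht' : t ∈ Set.Ioc (0:ℝ) 1 := by rwa [Set.uIoc_of_le zero_le_one] at ht
      have htx : t • x ∈ closedBall (0 : Pt 2) (‖x₀‖ + 1) := by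
        rw [mem_closedBall_zero_iff, norm_smul]
        have h1 : ‖x‖ ≤ ‖x₀‖ + 1 := by
          have := mem_ball_iff_norm.mp hx
          calc ‖x‖ ≤ ‖x₀‖ + ‖x - x₀‖ := by
                have := norm_add_le (x - x₀) x₀; simpa [sub_add_cancel, add_comm] using this
            _ ≤ ‖x₀‖ + 1 := by linarith
        calc ‖t‖ * ‖x‖ ≤ 1 * (‖x₀‖ + 1) := by
              apply mul_le_mul _ h1 (norm_nonneg _) zero_le_one
              rw [Real.norm_eq_abs, abs_le]; constructor <;> [linarith [ht'.1]; exact ht'.2]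
          _ = ‖x₀‖ + 1 := one_mul _
      rw [norm_smul (t ^ (k+1)) (fderiv ℝ f (t • x))]
      calc ‖t ^ (k+1)‖ * ‖fderiv ℝ f (t • x)‖ ≤ 1 * max M 0 := by
            apply mul_le_mul _ ((hM _ htx).trans (le_max_left _ _)) (norm_nonneg _) zero_le_one
            rw [Real.norm_eq_abs, abs_pow]
            apply pow_le_one₀ (abs_nonneg t)
            rw [abs_le]; constructor <;> [linarith [ht'.1]; exact ht'.2]
        _ = max M 0 := one_mul _
    · exact intervalIntegrable_const
    · filter_upwards with t
      intro ht x hx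
      have hd : HasFDerivAt f (fderiv ℝ f (t • x)) (t • x) :=
        (hf.differentiable (by simp) (t • x)).hasFDerivAt
      have hs : HasFDerivAt (fun y : Pt 2 => t • y)
          (t • ContinuousLinearMap.id ℝ (Pt 2)) x := (hasFDerivAt_id x).const_smul t
      have := (hd.comp x hs).fun_const_smul (t ^ k)
      convert this using 1
      all_goals ext v
      all_goals simp [ContinuousLinearMap.smul_apply, ContinuousLinearMap.comp_apply, _root_.map_smul,
        smul_smul, pow_succ, mul_comm]
  exact key

lemma lop_fderiv [CompleteSpace V] {f : Pt 2 → V} (hf : ContDiff ℝ ∞ f) (k : ℕ) :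
    fderiv ℝ (Lop k f) = Lop (k + 1) (fderiv ℝ f) :=
  funext fun x => (lop_hasFDerivAt hf k x).fderiv

lemma lop_comp_lie {W : Type*} [NormedAddCommGroup W] [NormedSpace ℝ W]
    [CompleteSpace V] [CompleteSpace W] (e : V ≃ₗᵢ[ℝ] W) {f : Pt 2 → V}
    (hf : Continuous f) (k : ℕ) (x : Pt 2) :
    Lop k (fun y => e (f y)) x = e (Lop k f x) := by
  have := lop_comp_clm (e.toContinuousLinearEquiv.toContinuousLinearMap) hf k x
  simpa using this

lemma lop_contDiff (n : ℕ) : ∀ {V : Type*} [NormedAddCommGroup V] [NormedSpace ℝ V]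
    [CompleteSpace V] (k : ℕ) (f : Pt 2 → V), ContDiff ℝ ∞ f → ContDiff ℝ n (Lop k f) := by
  induction n with
  | zero =>
    intro V _ _ _ k f hf
    rw [Nat.cast_zero, contDiff_zero]
    exact lop_continuous hf.continuous k
  | succ n IH =>
    intro V _ _ _ k f hf
    rw [show ((n + 1 : ℕ) : WithTop ℕ∞) = (n : WithTop ℕ∞) + 1 by push_cast; ring]
    rw [contDiff_succ_iff_fderiv]
    refine ⟨fun x => (lop_hasFDerivAt hf k x).differentiableAt, ?_, ?_⟩
    · intro h; exact absurd h (by simp)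
    · rw [lop_fderiv hf k]
      exact IH (k + 1) (fderiv ℝ f) (contDiff_infty_iff_fderiv.mp hf).2

lemma lop_contDiff_top [CompleteSpace V] (k : ℕ) (f : Pt 2 → V) (hf : ContDiff ℝ ∞ f) :
    ContDiff ℝ ∞ (Lop k f) :=
  contDiff_infty.2 fun n => lop_contDiff n k f hf

lemma lop_iteratedFDeriv (m : ℕ) : ∀ {V : Type*} [NormedAddCommGroup V] [NormedSpace ℝ V]
    [CompleteSpace V] (k : ℕ) (f : Pt 2 → V), ContDiff ℝ ∞ f → ∀ x : Pt 2,
    iteratedFDeriv ℝ m (Lop k f) x = Lop (k + m) (iteratedFDeriv ℝ m f) x := by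
  induction m with
  | zero =>
    intro V _ _ _ k f hf x
    rw [show iteratedFDeriv ℝ 0 (Lop k f) =
      (continuousMultilinearCurryFin0 ℝ (Pt 2) V).symm ∘ (Lop k f) from rfl]
    rw [show iteratedFDeriv ℝ 0 f =
      (continuousMultilinearCurryFin0 ℝ (Pt 2) V).symm ∘ f from rfl]
    simp only [Function.comp_apply, Nat.add_zero]
    exact (lop_comp_clm ((continuousMultilinearCurryFin0 ℝ (Pt 2) V).symm :
      V →L[ℝ] (Pt 2 [×0]→L[ℝ] V)) hf.continuous k x).symm
  | succ m IH =>
    intro V _ _ _ k f hf x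
    have hIH : iteratedFDeriv ℝ m (Lop k f) = Lop (k + m) (iteratedFDeriv ℝ m f) :=
      funext (IH k f hf)
    have hfm : ContDiff ℝ ∞ (iteratedFDeriv ℝ m f) :=
      hf.iteratedFDeriv_right (by exact_mod_cast le_top)
    rw [iteratedFDeriv_succ_eq_comp_left]
    simp only [Function.comp_apply]
    rw [hIH, lop_fderiv hfm (k + m)]
    have hfm' : ContDiff ℝ ∞ (fderiv ℝ (iteratedFDeriv ℝ m f)) :=
      (contDiff_infty_iff_fderiv.mp hfm).2
    rw [show k + (m + 1) = k + m + 1 by ring]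
    rw [iteratedFDeriv_succ_eq_comp_left]
    exact (lop_comp_lie ((continuousMultilinearCurryLeftEquiv ℝ
        (fun _ : Fin (m + 1) => Pt 2) V).symm) hfm'.continuous (k + m + 1) x).symm

lemma lop_norm_le {m : ℕ} [CompleteSpace V] {k : ℕ} {f : Pt 2 → V} (hf : ContDiff ℝ ∞ f)
    {C : ℝ} (hC : ∀ y : Pt 2, ‖iteratedFDeriv ℝ m f y‖ ≤ C) (x : Pt 2) :
    ‖iteratedFDeriv ℝ m (Lop k f) x‖ ≤ C := by
  rw [lop_iteratedFDeriv m k f hf x]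
  unfold Lop
  have := intervalIntegral.norm_integral_le_of_norm_le_const
    (C := C) (a := (0:ℝ)) (b := 1)
    (f := fun t => t ^ (k + m) • iteratedFDeriv ℝ m f (t • x)) ?_
  · simpa using this
  · intro t ht
    have ht' : t ∈ Set.Ioc (0:ℝ) 1 := by rwa [Set.uIoc_of_le zero_le_one] at ht
    rw [norm_smul (t ^ (k + m)) (iteratedFDeriv ℝ m f (t • x))]
    calc ‖t ^ (k + m)‖ * ‖iteratedFDeriv ℝ m f (t • x)‖ ≤ 1 * C := by
          apply mul_le_mul _ (hC _) (norm_nonneg _) zero_le_one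
          rw [Real.norm_eq_abs, abs_pow]
          apply pow_le_one₀ (abs_nonneg t)
          rw [abs_le]; constructor <;> [linarith [ht'.1]; exact ht'.2]
      _ = C := one_mul _

lemma lop_pderiv {f : Pt 2 → ℝ} (hf : ContDiff ℝ ∞ f) (k : ℕ) (i : Fin 2) (x : Pt 2) :
    pderivFun i (Lop k f) x = Lop (k + 1) (pderivFun i f) x := by
  unfold pderivFun
  rw [(lop_hasFDerivAt hf k x).fderiv]
  unfold Lop
  rw [ContinuousLinearMap.intervalIntegral_apply
    (lop_integrand_integrable (contDiff_infty_iff_fderiv.mp hf).2.continuous (k+1) x)]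
  rfl

lemma pderivFun_continuous {f : Pt 2 → ℝ} (hf : ContDiff ℝ ∞ f) (j : Fin 2) :
    Continuous (pderivFun j f) :=
  (contDiff_infty_iff_fderiv.mp hf).2.continuous.clm_apply continuous_const

lemma lop_euler {f : Pt 2 → ℝ} (hf : ContDiff ℝ ∞ f) (x : Pt 2) :
    Lop 0 f x + ∑ j : Fin 2, x j * Lop 1 (pderivFun j f) x = f x := by
  have hfc : Continuous f := hf.continuous
  have hf' : ContDiff ℝ ∞ (fderiv ℝ f) := (contDiff_infty_iff_fderiv.mp hf).2
  have hder : ∀ j : Fin 2, Continuous (pderivFun j f) := pderivFun_continuous hf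
  have hsum : ∑ j : Fin 2, x j * Lop 1 (pderivFun j f) x
      = ∫ t in (0:ℝ)..1, t * (fderiv ℝ f (t • x)) x := by
    have h1 : ∀ j : Fin 2, x j * Lop 1 (pderivFun j f) x
        = ∫ t in (0:ℝ)..1, x j * (t * pderivFun j f (t • x)) := by
      intro j
      unfold Lop
      rw [← intervalIntegral.integral_const_mul]
      refine intervalIntegral.integral_congr fun t _ => ?_
      simp [smul_eq_mul]
    rw [Finset.sum_congr rfl fun j _ => h1 j]
    rw [← intervalIntegral.integral_finset_sum]
    · congr 1; funext t
      have hx : (x : Pt 2) = ∑ j : Fin 2, x j • (Pi.single j (1:ℝ) : Pt 2) := by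
        funext i
        rw [Finset.sum_apply]
        simp [Pi.single_apply]
      calc ∑ j : Fin 2, x j * (t * pderivFun j f (t • x))
          = t * ∑ j : Fin 2, x j * pderivFun j f (t • x) := by
            rw [Finset.mul_sum]
            exact Finset.sum_congr rfl fun j _ => by ring
        _ = t * (fderiv ℝ f (t • x)) x := by
            congr 1
            set A := fderiv ℝ f (t • x) with hA
            have hpd : ∀ j : Fin 2, pderivFun j f (t • x) = A (Pi.single j 1) :=
              fun j => rfl
            simp only [hpd]
            conv_rhs => rw [hx]
            rw [map_sum]
            exact Finset.sum_congr rfl fun j _ => by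
              rw [ContinuousLinearMap.map_smul, smul_eq_mul]
    · intro j _
      apply Continuous.intervalIntegrable
      exact continuous_const.mul (continuous_id.mul
        ((hder j).comp (continuous_id.smul continuous_const)))
  rw [hsum]
  have hFTC : ∫ t in (0:ℝ)..1, (f (t • x) + t * (fderiv ℝ f (t • x)) x) = f x := by
    have key : ∀ t ∈ Set.uIcc (0:ℝ) 1, HasDerivAt (fun s : ℝ => s * f (s • x))
        (f (t • x) + t * (fderiv ℝ f (t • x)) x) t := by
      intro t _
      have hg : HasDerivAt (fun s : ℝ => f (s • x)) ((fderiv ℝ f (t • x)) x) t := by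
        have hs : HasDerivAt (fun s : ℝ => s • x) x t := by
          simpa using (hasDerivAt_id t).smul_const x
        exact (hf.differentiable (by simp)
          (t • x)).hasFDerivAt.comp_hasDerivAt t hs
      have := (hasDerivAt_id' t).fun_mul hg
      simpa [add_comm] using this
    have hint : IntervalIntegrable
        (fun t : ℝ => f (t • x) + t * (fderiv ℝ f (t • x)) x) volume 0 1 := by
      apply Continuous.intervalIntegrable
      apply (hfc.comp (continuous_id.smul continuous_const)).add
      exact continuous_id.mul ((hf'.continuous.clm_apply continuous_const).comp
        (continuous_id.smul continuous_const))
    have := intervalIntegral.integral_eq_sub_of_hasDerivAt key hint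
    simpa using this
  have hsplit : Lop 0 f x = ∫ t in (0:ℝ)..1, f (t • x) := by
    unfold Lop; congr 1; funext t; simp
  rw [hsplit, ← hFTC]
  rw [← intervalIntegral.integral_add]
  · exact (hfc.comp (continuous_id.smul continuous_const)).intervalIntegrable _ _
  · apply Continuous.intervalIntegrable
    exact continuous_id.mul ((hf'.continuous.clm_apply continuous_const).comp
      (continuous_id.smul continuous_const))

lemma coord_contDiff (j : Fin 2) : ContDiff ℝ ∞ (fun y : Pt 2 => y j) :=
  (ContinuousLinearMap.proj j : Pt 2 →L[ℝ] ℝ).contDiff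

lemma pderivFun_mul {a b : Pt 2 → ℝ} (ha : ContDiff ℝ ∞ a) (hb : ContDiff ℝ ∞ b)
    (i : Fin 2) (x : Pt 2) :
    pderivFun i (fun y => a y * b y) x
      = pderivFun i a x * b x + a x * pderivFun i b x := by
  unfold pderivFun
  rw [fderiv_fun_mul (ha.differentiable (by simp) x)
    (hb.differentiable (by simp) x)]
  simp [ContinuousLinearMap.add_apply, ContinuousLinearMap.smul_apply, smul_eq_mul]
  ring

lemma pderivFun_coord (i j : Fin 2) (x : Pt 2) :
    pderivFun i (fun y : Pt 2 => y j) x = if i = j then 1 else 0 := by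
  unfold pderivFun
  rw [show (fun y : Pt 2 => y j) = (ContinuousLinearMap.proj j : Pt 2 →L[ℝ] ℝ) from rfl]
  rw [ContinuousLinearMap.fderiv]
  simp [ContinuousLinearMap.proj_apply, Pi.single_apply, eq_comm]

lemma iFD_sub_apply {m : ℕ} {a b : Pt 2 → ℝ} (ha : ContDiff ℝ ∞ a) (hb : ContDiff ℝ ∞ b)
    (x : Pt 2) : iteratedFDeriv ℝ m (fun y => a y - b y) x
      = iteratedFDeriv ℝ m a x - iteratedFDeriv ℝ m b x := by
  have h1 : (fun y => a y - b y) = a + (-b) := by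
    funext y; simp [sub_eq_add_neg]
  rw [h1, iteratedFDeriv_add_apply (f := a) (g := -b)
    (ha.of_le (by exact_mod_cast le_top)).contDiffAt
    (by exact ((hb.of_le (by exact_mod_cast le_top)) : ContDiff ℝ m b).neg.contDiffAt),
    iteratedFDeriv_neg_apply, sub_eq_add_neg]

lemma K_uniform {g : Pt 2 → ℝ} (hg : ContDiff ℝ ∞ g) (hgc : HasCompactSupport g)
    {φs : ℕ → Pt 2 → ℝ} {ψ : Pt 2 → ℝ} (hφs : ∀ n, ContDiff ℝ ∞ (φs n))
    (hψ : ContDiff ℝ ∞ ψ)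
    (hconv : ∀ q : ℕ, TendstoUniformly (fun n x => iteratedFDeriv ℝ q (φs n) x)
      (fun x => iteratedFDeriv ℝ q ψ x) atTop) (m : ℕ) :
    TendstoUniformly (fun n x => iteratedFDeriv ℝ m (fun y => g y * Lop 1 (φs n) y) x)
      (fun x => iteratedFDeriv ℝ m (fun y => g y * Lop 1 ψ y) x) atTop := by
  have hgb : ∀ q : ℕ, ∃ C : ℝ, 0 ≤ C ∧ ∀ x, ‖iteratedFDeriv ℝ q g x‖ ≤ C := by
    intro q
    obtain ⟨C, hC⟩ := (hg.continuous_iteratedFDeriv (by exact_mod_cast le_top)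
      ).bounded_above_of_compact_support (hgc.iteratedFDeriv q)
    exact ⟨C, le_trans (norm_nonneg _) (hC 0), hC⟩
  choose C hC0 hC using hgb
  set B : ℝ := ∑ q ∈ Finset.range (m+1), (m.choose q : ℝ) * C q with hBdef
  have hB0 : 0 ≤ B :=
    Finset.sum_nonneg fun q _ => mul_nonneg (by positivity) (hC0 q)
  rw [Metric.tendstoUniformly_iff]
  intro ε hε
  have hδ : 0 < ε / (B + 1) := by positivity
  have hev : ∀ᶠ n in atTop, ∀ q ∈ Finset.range (m+1), ∀ x : Pt 2,
      dist (iteratedFDeriv ℝ q ψ x) (iteratedFDeriv ℝ q (φs n) x) < ε / (B + 1) := by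
    rw [Filter.eventually_all_finset]
    intro q _
    exact Metric.tendstoUniformly_iff.mp (hconv q) _ hδ
  filter_upwards [hev] with n hn x
  have hh : ContDiff ℝ ∞ (fun y => ψ y - φs n y) := hψ.sub (hφs n)
  have hbq : ∀ q, q ≤ m → ∀ y : Pt 2,
      ‖iteratedFDeriv ℝ q (fun y => ψ y - φs n y) y‖ ≤ ε / (B + 1) := by
    intro q hq y
    rw [iFD_sub_apply hψ (hφs n) y, ← dist_eq_norm]
    exact le_of_lt (hn q (Finset.mem_range.mpr (Nat.lt_succ_of_le hq)) y)
  have hdiff : dist (iteratedFDeriv ℝ m (fun y => g y * Lop 1 ψ y) x)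
      (iteratedFDeriv ℝ m (fun y => g y * Lop 1 (φs n) y) x)
      = ‖iteratedFDeriv ℝ m (fun y => g y * Lop 1 (fun z => ψ z - φs n z) y) x‖ := by
    rw [dist_eq_norm]
    congr 1
    rw [← iFD_sub_apply (hg.mul (lop_contDiff_top 1 ψ hψ))
      (hg.mul (lop_contDiff_top 1 (φs n) (hφs n))) x]
    congr 1
    funext y
    rw [lop_sub hψ.continuous (hφs n).continuous]
    ring
  rw [hdiff]
  have hmul := norm_iteratedFDeriv_mul_le (𝕜 := ℝ)
    (hg.of_le (by exact_mod_cast le_top : (m : WithTop ℕ∞) ≤ ∞))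
    ((lop_contDiff_top 1 _ hh).of_le (by exact_mod_cast le_top : (m : WithTop ℕ∞) ≤ ∞)) x
    (le_refl (m : WithTop ℕ∞))
  have hstep : ∀ q ∈ Finset.range (m+1),
      (m.choose q : ℝ) * ‖iteratedFDeriv ℝ q g x‖ *
        ‖iteratedFDeriv ℝ (m - q) (Lop 1 (fun z => ψ z - φs n z)) x‖
      ≤ ((m.choose q : ℝ) * C q) * (ε / (B + 1)) := by
    intro q _
    have h1 : ‖iteratedFDeriv ℝ (m - q) (Lop 1 (fun z => ψ z - φs n z)) x‖ ≤ ε / (B + 1) :=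
      lop_norm_le hh (hbq (m - q) (Nat.sub_le m q)) x
    have h2 : (m.choose q : ℝ) * ‖iteratedFDeriv ℝ q g x‖ ≤ (m.choose q : ℝ) * C q :=
      mul_le_mul_of_nonneg_left (hC q x) (by positivity)
    exact mul_le_mul h2 h1 (norm_nonneg _) (mul_nonneg (by positivity) (hC0 q))
  have h3 := Finset.sum_le_sum hstep
  rw [← Finset.sum_mul, ← hBdef] at h3
  have hfin : B * (ε / (B + 1)) < ε := by
    have hlt : B * (ε / (B + 1)) < (B + 1) * (ε / (B + 1)) :=
      mul_lt_mul_of_pos_right (by linarith) hδ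
    have he : (B + 1) * (ε / (B + 1)) = ε := by field_simp
    linarith
  exact lt_of_le_of_lt (hmul.trans h3) hfin


end Statement5Aux

/-- A curl-free element of `E(Ω,ℝ²)` on a simply connected domain is
the gradient of an element of `E(Ω)`. -/
theorem statement_5 (Ω : Set (Pt 2)) (hopen : IsOpen Ω) (hbdd : Bornology.IsBounded Ω)
    (hsc : SimplyConnectedSpace Ω) (h0 : (0 : Pt 2) ∈ Ω)
    (E : Fin 2 → Dist 2 Ω) (hE : ∀ i, SuppIn (E i) {0})
    (hcurl : CurlZero E) :
    ∃ u : Dist 2 Ω, SuppIn u {0} ∧ IsGradOf u E := by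
  classical
  obtain ⟨ε, hε, hball⟩ := Metric.isOpen_iff.mp hopen 0 h0
  set r : ℝ := ε / 2 with hrdef
  have hr : 0 < r := by positivity
  have hsub : closedBall (0:Pt 2) r ⊆ Ω := by
    refine Subset.trans (closedBall_subset_ball ?_) hball
    rw [hrdef]; linarith
  let χb : ContDiffBump (0:Pt 2) := ⟨r/2, r, by positivity, by linarith⟩
  set χ : Pt 2 → ℝ := fun x => χb x with hχdef
  have hχs : ContDiff ℝ ∞ χ := χb.contDiff
  have hχc : HasCompactSupport χ := χb.hasCompactSupport
  have hχsupp : Function.support χ ⊆ closedBall (0:Pt 2) r := by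
    have hs : Function.support χ = ball (0:Pt 2) r := χb.support_eq
    rw [hs]; exact ball_subset_closedBall
  have hχone : ∀ x : Pt 2, ‖x‖ < r/2 → χ x = 1 := fun x hx =>
    χb.one_of_mem_closedBall (mem_closedBall_zero_iff.mpr hx.le)
  have hχtsup : tsupport χ ⊆ Ω := (closure_minimal hχsupp isClosed_closedBall).trans hsub
  have hχder0 : ∀ (i : Fin 2) (x : Pt 2), ‖x‖ < r/2 → pderivFun i χ x = 0 := by
    intro i x hx
    unfold pderivFun
    have hev : χ =ᶠ[𝓝 x] fun _ => (1:ℝ) := by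
      filter_upwards [isOpen_ball.mem_nhds (mem_ball_zero_iff.mpr hx)] with y hy
      exact hχone y (mem_ball_zero_iff.mp hy)
    rw [hev.fderiv_eq]
    simp
  have hEvan : ∀ (i : Fin 2) (ψ : TestFun 2 Ω) (ρ : ℝ), 0 < ρ →
      (∀ x : Pt 2, ‖x‖ < ρ → (ψ : Pt 2 → ℝ) x = 0) → (E i).toLin ψ = 0 := by
    intro i ψ ρ hρ hv
    apply hE i
    rw [Set.inter_singleton_eq_empty]
    intro h0mem
    have hsupp : Function.support (ψ : Pt 2 → ℝ) ⊆ (ball (0:Pt 2) ρ)ᶜ := by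
      intro x hx
      simp only [Set.mem_compl_iff, mem_ball_zero_iff, not_lt]
      by_contra hcon; push_neg at hcon
      exact hx (hv x hcon)
    have h2 : (0:Pt 2) ∈ (ball (0:Pt 2) ρ)ᶜ :=
      closure_minimal hsupp isOpen_ball.isClosed_compl h0mem
    exact h2 (mem_ball_self hρ)
  have mk : ∀ h : Pt 2 → ℝ, ContDiff ℝ ∞ h →
      Function.support h ⊆ closedBall (0:Pt 2) r → IsTestFun Ω h := by
    intro h hh hs
    have hts : tsupport h ⊆ closedBall (0:Pt 2) r := closure_minimal hs isClosed_closedBall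
    exact ⟨hh, IsCompact.of_isClosed_subset (isCompact_closedBall _ _)
      (isClosed_tsupport h) hts, hts.trans hsub⟩
  have hpd_supp : ∀ i : Fin 2, Function.support (pderivFun i χ) ⊆ closedBall (0:Pt 2) r := by
    intro i x hx
    have hmem : x ∈ tsupport χ := by
      apply support_fderiv_subset (𝕜 := ℝ)
      intro hzero
      exact hx (by simp [pderivFun, hzero])
    exact closure_minimal hχsupp isClosed_closedBall hmem
  -- the basic localized test functions
  let Ktf : ℕ → Fin 2 → TestFun 2 Ω → TestFun 2 Ω := fun k j φ =>
    ⟨fun x => (χ x * x j) * Lop k (↑φ : Pt 2 → ℝ) x,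
      mk _ ((hχs.mul (coord_contDiff j)).mul (lop_contDiff_top k _ φ.isTF.1))
        (fun x hx => hχsupp (show χ x ≠ 0 from fun hzero => hx (by simp [hzero])))⟩
  have Ktf_coe : ∀ (k : ℕ) (j : Fin 2) (φ : TestFun 2 Ω),
      ((Ktf k j φ : TestFun 2 Ω) : Pt 2 → ℝ)
        = fun x => (χ x * x j) * Lop k (↑φ : Pt 2 → ℝ) x := fun _ _ _ => rfl
  -- linearity of the construction
  have Ktf_add : ∀ (k : ℕ) (j : Fin 2) (φ ψ : TestFun 2 Ω),
      Ktf k j (φ + ψ) = Ktf k j φ + Ktf k j ψ := by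
    intro k j φ ψ
    apply Subtype.ext
    funext x
    show (χ x * x j) * Lop k (↑(φ + ψ) : Pt 2 → ℝ) x
      = (χ x * x j) * Lop k (↑φ : Pt 2 → ℝ) x + (χ x * x j) * Lop k (↑ψ : Pt 2 → ℝ) x
    have hco : (↑(φ + ψ) : Pt 2 → ℝ)
        = fun y => (↑φ : Pt 2 → ℝ) y + (↑ψ : Pt 2 → ℝ) y := rfl
    rw [hco, lop_add φ.isTF.1.continuous ψ.isTF.1.continuous]
    ring
  have Ktf_smul : ∀ (k : ℕ) (j : Fin 2) (c : ℝ) (φ : TestFun 2 Ω),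
      Ktf k j (c • φ) = c • Ktf k j φ := by
    intro k j c φ
    apply Subtype.ext
    funext x
    show (χ x * x j) * Lop k (↑(c • φ) : Pt 2 → ℝ) x
      = c • ((χ x * x j) * Lop k (↑φ : Pt 2 → ℝ) x)
    have hco : (↑(c • φ) : Pt 2 → ℝ) = fun y => c • (↑φ : Pt 2 → ℝ) y := rfl
    rw [hco, lop_smul φ.isTF.1.continuous c]
    simp [smul_eq_mul]; ring
  -- the linear functional
  let uL : TestFun 2 Ω →ₗ[ℝ] ℝ :=
    { toFun := fun φ => -((E 0).toLin (Ktf 1 0 φ) + (E 1).toLin (Ktf 1 1 φ))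
      map_add' := by
        intro φ ψ
        show -((E 0).toLin (Ktf 1 0 (φ + ψ)) + (E 1).toLin (Ktf 1 1 (φ + ψ)))
          = -((E 0).toLin (Ktf 1 0 φ) + (E 1).toLin (Ktf 1 1 φ))
            + -((E 0).toLin (Ktf 1 0 ψ) + (E 1).toLin (Ktf 1 1 ψ))
        rw [Ktf_add, Ktf_add, map_add, map_add]; ring
      map_smul' := by
        intro c φ
        show -((E 0).toLin (Ktf 1 0 (c • φ)) + (E 1).toLin (Ktf 1 1 (c • φ)))
          = (RingHom.id ℝ) c • -((E 0).toLin (Ktf 1 0 φ) + (E 1).toLin (Ktf 1 1 φ))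
        rw [Ktf_smul, Ktf_smul, LinearMap.map_smul, LinearMap.map_smul]
        simp [smul_eq_mul]; ring }
  -- continuity
  have hcont : ∀ (φs : ℕ → TestFun 2 Ω) (ψ : TestFun 2 Ω), TFConv φs ψ →
      Tendsto (fun n => uL (φs n)) atTop (𝓝 (uL ψ)) := by
    intro φs ψ hconv
    have hTF : ∀ j : Fin 2, TFConv (fun n => Ktf 1 j (φs n)) (Ktf 1 j ψ) := by
      intro j
      constructor
      · refine ⟨closedBall (0:Pt 2) r, isCompact_closedBall _ _, hsub, fun n => ?_⟩
        exact closure_minimal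
          (fun x hx => hχsupp (show χ x ≠ 0 from fun hzero => hx (by simp [Ktf_coe, hzero])))
          isClosed_closedBall
      · intro m
        exact K_uniform (hχs.mul (coord_contDiff j))
          (hχc.mul_right) (fun n => (φs n).isTF.1) ψ.isTF.1 hconv.2 m
    exact (((E 0).cont _ _ (hTF 0)).add ((E 1).cont _ _ (hTF 1))).neg
  refine ⟨⟨uL, hcont⟩, ?_, ?_⟩
  · -- SuppIn
    intro ψ hts
    have h0n : (0:Pt 2) ∉ tsupport (ψ : Pt 2 → ℝ) := Set.inter_singleton_eq_empty.mp hts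
    obtain ⟨ρ, hρ, hballρ⟩ :=
      Metric.isOpen_iff.mp (isClosed_tsupport (ψ : Pt 2 → ℝ)).isOpen_compl 0 h0n
    have hv : ∀ x : Pt 2, ‖x‖ < ρ → (ψ : Pt 2 → ℝ) x = 0 := fun x hx =>
      image_eq_zero_of_notMem_tsupport (hballρ (mem_ball_zero_iff.mpr hx))
    show -((E 0).toLin (Ktf 1 0 ψ) + (E 1).toLin (Ktf 1 1 ψ)) = 0
    have hz : ∀ j : Fin 2, (E j).toLin (Ktf 1 j ψ) = 0 := by
      intro j
      apply hEvan j _ ρ hρ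
      intro x hx
      show (χ x * x j) * Lop 1 (↑ψ : Pt 2 → ℝ) x = 0
      rw [lop_vanish hv 1 hx, mul_zero]
    rw [hz 0, hz 1]; ring
  · -- IsGradOf
    intro i φ
    have hf : ContDiff ℝ ∞ ((φ : TestFun 2 Ω) : Pt 2 → ℝ) := φ.isTF.1
    set f : Pt 2 → ℝ := ((φ : TestFun 2 Ω) : Pt 2 → ℝ) with hfdef
    have hfd : ∀ j : Fin 2, ContDiff ℝ ∞ (pderivFun j f) := fun j =>
      (isTestFun_pderiv j φ.isTF).1
    let a : TestFun 2 Ω := ⟨fun x => χ x * Lop 0 f x,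
      mk _ (hχs.mul (lop_contDiff_top 0 f hf))
        (fun x hx => hχsupp (fun hzero => hx (by simp [hzero])))⟩
    let b : Fin 2 → TestFun 2 Ω := fun j =>
      ⟨fun x => (χ x * x j) * Lop 1 (pderivFun j f) x,
        mk _ ((hχs.mul (coord_contDiff j)).mul (lop_contDiff_top 1 _ (hfd j)))
          (fun x hx => hχsupp (fun hzero => hx (by simp [hzero])))⟩
    let h1 : Fin 2 → Fin 2 → TestFun 2 Ω := fun i' j =>
      ⟨fun x => pderivFun i' χ x * (x j * Lop 0 f x),
        mk _ (((isTestFun_pderiv i' ⟨hχs, hχc, hχtsup⟩).1).mul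
          ((coord_contDiff j).mul (lop_contDiff_top 0 f hf)))
          (fun x hx => hpd_supp i' (fun hzero => hx (by simp [hzero])))⟩
    let χφ : TestFun 2 Ω := ⟨fun x => χ x * f x,
      mk _ (hχs.mul hf) (fun x hx => hχsupp (fun hzero => hx (by simp [hzero])))⟩
    have hswap : ∀ (ψ : TestFun 2 Ω) (i' j' : Fin 2),
        (E j').toLin (pdT i' ψ) = (E i').toLin (pdT j' ψ) := by
      intro ψ i' j'
      have hc := hcurl ψ
      have flt : ∀ z : Fin 2, z = 0 ∨ z = 1 := by decide
      rcases flt i' with h|h <;> rcases flt j' with h'|h' <;> subst h <;> subst h'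
      · rfl
      · linarith
      · linarith
      · rfl
    have hC1 : ∀ j : Fin 2, Ktf 1 j (pdT i φ)
        = pdT i (Ktf 0 j φ) - (if i = j then (1:ℝ) else 0) • a - h1 i j := by
      intro j
      apply Subtype.ext
      funext x
      show (χ x * x j) * Lop 1 (pderivFun i f) x
        = pderivFun i (fun y => (χ y * y j) * Lop 0 f y) x
          - (if i = j then (1:ℝ) else 0) * (χ x * Lop 0 f x)
          - pderivFun i χ x * (x j * Lop 0 f x)
      have hprod : pderivFun i (fun y => (χ y * y j) * Lop 0 f y) x
          = pderivFun i (fun y => χ y * y j) x * Lop 0 f x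
            + (χ x * x j) * pderivFun i (Lop 0 f) x :=
        pderivFun_mul (hχs.mul (coord_contDiff j)) (lop_contDiff_top 0 f hf) i x
      have hprod2 : pderivFun i (fun y => χ y * y j) x
          = pderivFun i χ x * x j + χ x * (if i = j then 1 else 0) := by
        rw [pderivFun_mul hχs (coord_contDiff j) i x, pderivFun_coord]
      have hdF : pderivFun i (Lop 0 f) x = Lop 1 (pderivFun i f) x := by
        simpa using lop_pderiv hf 0 i x
      rw [hprod, hprod2, hdF]
      ring
    have hC2 : ∀ j : Fin 2, pdT j (Ktf 0 j φ) = h1 j j + a + b j := by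
      intro j
      apply Subtype.ext
      funext x
      show pderivFun j (fun y => (χ y * y j) * Lop 0 f y) x
        = pderivFun j χ x * (x j * Lop 0 f x) + χ x * Lop 0 f x
          + (χ x * x j) * Lop 1 (pderivFun j f) x
      have hprod : pderivFun j (fun y => (χ y * y j) * Lop 0 f y) x
          = pderivFun j (fun y => χ y * y j) x * Lop 0 f x
            + (χ x * x j) * pderivFun j (Lop 0 f) x :=
        pderivFun_mul (hχs.mul (coord_contDiff j)) (lop_contDiff_top 0 f hf) j x
      have hprod2 : pderivFun j (fun y => χ y * y j) x
          = pderivFun j χ x * x j + χ x * (if j = j then 1 else 0) := by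
        rw [pderivFun_mul hχs (coord_contDiff j) j x, pderivFun_coord]
      have hdF : pderivFun j (Lop 0 f) x = Lop 1 (pderivFun j f) x := by
        simpa using lop_pderiv hf 0 j x
      rw [hprod, hprod2, hdF, if_pos rfl]
      ring
    have hEh1 : ∀ (jE i' j : Fin 2), (E jE).toLin (h1 i' j) = 0 := by
      intro jE i' j
      apply hEvan jE _ (r/2) (by positivity)
      intro x hx
      show pderivFun i' χ x * (x j * Lop 0 f x) = 0
      rw [hχder0 i' x hx, zero_mul]
    have key : ∀ j : Fin 2, (E j).toLin (Ktf 1 j (pdT i φ))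
        = (E i).toLin a + (E i).toLin (b j)
          - (if i = j then (1:ℝ) else 0) * (E j).toLin a := by
      intro j
      rw [hC1 j, map_sub, map_sub, LinearMap.map_smul, smul_eq_mul, hEh1 j i j,
        hswap (Ktf 0 j φ) i j, hC2 j, map_add, map_add, hEh1 i j j]
      ring
    have hC3 : a + b 0 + b 1 = χφ := by
      apply Subtype.ext
      funext x
      show χ x * Lop 0 f x + (χ x * x 0) * Lop 1 (pderivFun 0 f) x
          + (χ x * x 1) * Lop 1 (pderivFun 1 f) x = χ x * f x
      have he := lop_euler hf x
      rw [Fin.sum_univ_two] at he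
      rw [← he]
      ring
    have hsum : (E i).toLin a + (E i).toLin (b 0) + (E i).toLin (b 1)
        = (E i).toLin φ := by
      have h1' : (E i).toLin (a + b 0 + b 1) = (E i).toLin χφ := by rw [hC3]
      rw [map_add, map_add] at h1'
      have h2' : (E i).toLin (χφ - φ) = 0 := by
        apply hEvan i _ (r/2) (by positivity)
        intro x hx
        show χ x * f x - f x = 0
        rw [hχone x hx, one_mul, sub_self]
      rw [map_sub] at h2'
      linarith
    show (E i).toLin φ
      = -(-((E 0).toLin (Ktf 1 0 (pdT i φ)) + (E 1).toLin (Ktf 1 1 (pdT i φ))))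
    rw [neg_neg, key 0, key 1]
    by_cases hi : i = 0
    · subst hi
      rw [if_pos rfl, if_neg (show (0:Fin 2) ≠ 1 by decide)]
      linarith
    · have hi1 : i = 1 := by omega
      subst hi1
      rw [if_pos rfl, if_neg (show (1:Fin 2) ≠ 0 by decide)]
      linarith

end Paper
end
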